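/- In the interventional DAG D_interv obtained from a time-invariant DAG D of a stationary Markov process of order p₀ (with possible instantaneous effects) by deleting all edges into node (c₂, t-s): if every path between X_{c₂,t-s} and X_{c₁,t} contains a collider, then every such path is blocked by the adjustment set X̃ = ∪_{c≠c₂}{X_{c,t-s}} ∪ {X_{t-s-1},...,X_{t-s-p}} (p ≥ p₀); consequently X_{c₂,t-s} and X_{c₁,t} are d-separated given X̃ in D_interv. -/

import Mathlib

namespace MintT

variable {V : Type*}

/-- `u` and `v` are adjacent in the undirected skeleton of the digraph `E`. -/
def Adj (E : V → V → Prop) (u v : V) : Prop := E u v ∨ E v u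

/-- `ℓ` is a path between `a` and `b`: consecutive vertices are adjacent and
there are no repeated vertices. -/
def IsPathBetween (E : V → V → Prop) (a b : V) (ℓ : List V) : Prop :=
  ℓ.Chain' (Adj E) ∧ ℓ.head? = some a ∧ ℓ.getLast? = some b ∧ ℓ.Nodup

/-- The vertex `v` at interior position `i+1` of `ℓ` is a collider:
both neighbouring edges of the path point into `v`. -/
def IsColliderOn (E : V → V → Prop) (ℓ : List V) (i : ℕ) (v : V) : Prop :=
  ∃ u w, ℓ[i]? = some u ∧ ℓ[i + 1]? = some v ∧ ℓ[i + 2]? = some w ∧ E u v ∧ E w v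

/-- The vertex `v` at interior position `i+1` of `ℓ` is a non-collider. -/
def IsNonColliderOn (E : V → V → Prop) (ℓ : List V) (i : ℕ) (v : V) : Prop :=
  ∃ u w, ℓ[i]? = some u ∧ ℓ[i + 1]? = some v ∧ ℓ[i + 2]? = some w ∧ ¬(E u v ∧ E w v)

/-- Descendant relation of the digraph `E`. -/
def Desc (E : V → V → Prop) (v w : V) : Prop := Relation.ReflTransGen E v w

/-- `ℓ` is blocked by `Z`: it contains a non-collider in `Z`, or a collider
neither belonging to `Z` nor having a descendant in `Z` (standard d-separation
blocking). -/
def Blocked (E : V → V → Prop) (Z : Set V) (ℓ : List V) : Prop :=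
  ∃ i v, (IsNonColliderOn E ℓ i v ∧ v ∈ Z) ∨
    (IsColliderOn E ℓ i v ∧ v ∉ Z ∧ ∀ w, Desc E v w → w ∉ Z)

/-- `a` and `b` are d-separated given `Z` in the digraph `E`. -/
def DSep (E : V → V → Prop) (a b : V) (Z : Set V) : Prop :=
  ∀ ℓ, IsPathBetween E a b ℓ → Blocked E Z ℓ

end MintT

/-- In the interventional DAG `D_interv` obtained from the
time-invariant DAG `D` of a stationary Markov process of order `p₀` (with
possible instantaneous effects) by deleting all edges into the node
`(c₂, t-s)`: if every path between `X_{c₂,t-s}` and `X_{c₁,t}` contains a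
collider, then every such path is blocked by the adjustment set
`X̃ = ∪_{c≠c₂}{X_{c,t-s}} ∪ {X_{t-s-1},…,X_{t-s-p}}` (with `p ≥ p₀`);
consequently `X_{c₂,t-s}` and `X_{c₁,t}` are d-separated given `X̃` in
`D_interv`. -/
theorem collider_paths_blocked_by_instantaneous_adjustment
    (l p₀ p : ℕ) (hp : p₀ ≤ p)
    (par : Fin l × ℤ → Fin l × ℤ → Prop)
    -- edges go forward in time by at most `p₀` steps, or are instantaneous
    -- between different components:
    (hstruct : ∀ (d c : Fin l) (τ' τ : ℤ), par (d, τ') (c, τ) →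
      (τ' < τ ∧ τ - τ' ≤ (p₀ : ℤ)) ∨ (τ' = τ ∧ d ≠ c))
    (c₁ c₂ : Fin l) (t s : ℤ) (hs : 1 ≤ s)
    -- the interventional DAG: all arrows into `(c₂, t-s)` are deleted:
    (parI : Fin l × ℤ → Fin l × ℤ → Prop)
    (hparI : ∀ u v, parI u v ↔ par u v ∧ v ≠ (c₂, t - s))
    -- the adjustment set X̃:
    (Z : Set (Fin l × ℤ))
    (hZ : Z = {v | (v.2 = t - s ∧ v.1 ≠ c₂) ∨
      (t - s - (p : ℤ) ≤ v.2 ∧ v.2 ≤ t - s - 1)})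
    -- every path between the intervention node and the target has a collider:
    (hcol : ∀ ℓ, MintT.IsPathBetween parI (c₂, t - s) (c₁, t) ℓ →
      ∃ i v, MintT.IsColliderOn parI ℓ i v) :
    (∀ ℓ, MintT.IsPathBetween parI (c₂, t - s) (c₁, t) ℓ →
        MintT.Blocked parI Z ℓ) ∧
      MintT.DSep parI (c₂, t - s) (c₁, t) Z := by
  classical
  -- basic monotonicity of time along edges
  have hImono : ∀ u v : Fin l × ℤ, parI u v → u.2 ≤ v.2 := by
    intro u v h
    have hpar : par (u.1, u.2) (v.1, v.2) := by
      simpa using ((hparI u v).mp h).1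
    rcases hstruct u.1 v.1 u.2 v.2 hpar with ⟨h1, _⟩ | ⟨h1, _⟩ <;> omega
  have hdesc : ∀ v w : Fin l × ℤ, MintT.Desc parI v w → v.2 ≤ w.2 := by
    intro v w h
    induction h with
    | refl => exact le_rfl
    | tail _ h₂ ih => exact ih.trans (hImono _ _ h₂)
  have hnotZ : ∀ x : Fin l × ℤ, t - s < x.2 → x ∉ Z := by
    intro x hx hxZ
    rw [hZ] at hxZ
    rcases hxZ with ⟨h1, _⟩ | ⟨_, h2⟩ <;> omega
  have main : ∀ ℓ, MintT.IsPathBetween parI (c₂, t - s) (c₁, t) ℓ →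
      MintT.Blocked parI Z ℓ := by
    intro ℓ hℓ
    obtain ⟨hchain, hhead, hlast, hnodup⟩ := hℓ
    have h0 : ℓ[0]? = some (c₂, t - s) := by
      rw [← List.head?_eq_getElem?]; exact hhead
    have hlen1 : 1 ≤ ℓ.length := by
      rcases ℓ with _ | ⟨a, l'⟩
      · simp at h0
      · simp
    set P : ℕ → Prop := fun i => ∃ v : Fin l × ℤ, ℓ[i]? = some v ∧ v.2 ≤ t - s
      with hPdef
    set n := ℓ.length - 1 with hn
    have hP0 : P 0 := ⟨_, h0, le_rfl⟩
    set i₀ := Nat.findGreatest P n with hi₀def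
    have hi₀P : P i₀ := Nat.findGreatest_spec (Nat.zero_le n) hP0
    have hi₀le : i₀ ≤ n := Nat.findGreatest_le n
    have hgt : ∀ k, i₀ < k → ∀ v : Fin l × ℤ, ℓ[k]? = some v → t - s < v.2 := by
      intro k hk v hv
      by_contra hcon
      push_neg at hcon
      have hPk : P k := ⟨v, hv, hcon⟩
      have hkn : k ≤ n := by
        by_contra hkn
        push_neg at hkn
        have hnone : ℓ[k]? = none := List.getElem?_eq_none (by omega)
        rw [hnone] at hv; cases hv
      exact Nat.findGreatest_is_greatest hk hkn hPk
    have hlastE : ℓ[n]? = some (c₁, t) := by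
      rw [hn, ← List.getLast?_eq_getElem?]; exact hlast
    have hi₀n : i₀ < n := by
      rcases lt_or_eq_of_le hi₀le with h | h
      · exact h
      · exfalso
        obtain ⟨v, hv, hvle⟩ := hi₀P
        rw [h, hlastE] at hv
        have : v = (c₁, t) := by exact Option.some_inj.mp hv.symm
        rw [this] at hvle
        simp only at hvle
        omega
    obtain ⟨u, hu, hule⟩ := hi₀P
    have hlt1 : i₀ < ℓ.length := by omega
    have hlt2 : i₀ + 1 < ℓ.length := by omega
    have hw : ℓ[i₀ + 1]? = some ℓ[i₀ + 1] := List.getElem?_eq_getElem hlt2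
    set w := ℓ[i₀ + 1] with hwdef
    have hwgt : t - s < w.2 := hgt (i₀ + 1) (by omega) w hw
    have hu' : ℓ[i₀] = u := by
      rw [List.getElem?_eq_getElem hlt1] at hu
      exact Option.some_inj.mp hu
    have hadj : MintT.Adj parI u w := by
      have h := List.isChain_iff_getElem.mp hchain i₀ (by omega)
      simpa [List.get_eq_getElem, hu', ← hwdef] using h
    have hnwu : ¬ parI w u := by
      intro h
      have hpar : par (w.1, w.2) (u.1, u.2) := by
        simpa using ((hparI w u).mp h).1
      rcases hstruct w.1 u.1 w.2 u.2 hpar with ⟨h1, _⟩ | ⟨h1, _⟩ <;> omega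
    have hedge : parI u w := hadj.resolve_right hnwu
    have hparuw : par (u.1, u.2) (w.1, w.2) := by
      simpa using ((hparI u w).mp hedge).1
    have hbound : w.2 - u.2 ≤ (p₀ : ℤ) := by
      rcases hstruct u.1 w.1 u.2 w.2 hparuw with ⟨_, h2⟩ | ⟨h1, _⟩ <;> omega
    rcases Nat.eq_zero_or_pos i₀ with hz | hpos
    · -- the start is the last vertex with time ≤ t-s : use a collider
      obtain ⟨i, v, hv⟩ := hcol ℓ ⟨hchain, hhead, hlast, hnodup⟩
      refine ⟨i, v, Or.inr ⟨hv, ?_, ?_⟩⟩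
      · obtain ⟨a, b, _, hvv, _, _, _⟩ := hv
        exact hnotZ v (hgt (i + 1) (by omega) v hvv)
      · obtain ⟨a, b, _, hvv, _, _, _⟩ := hv
        have hvgt : t - s < v.2 := hgt (i + 1) (by omega) v hvv
        intro w' hdw
        exact hnotZ w' (lt_of_lt_of_le hvgt (hdesc v w' hdw))
    · -- u is interior: it is a non-collider belonging to Z
      have hlt0 : i₀ - 1 < ℓ.length := by omega
      have hx : ℓ[i₀ - 1]? = some ℓ[i₀ - 1] := List.getElem?_eq_getElem hlt0
      have e1 : i₀ - 1 + 1 = i₀ := by omega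
      have e2 : i₀ - 1 + 2 = i₀ + 1 := by omega
      refine ⟨i₀ - 1, u, Or.inl ⟨⟨ℓ[i₀ - 1], w, hx, ?_, ?_, ?_⟩, ?_⟩⟩
      · rw [e1]; exact hu
      · rw [e2]; exact hw
      · rintro ⟨_, hwu⟩; exact hnwu hwu
      · -- u ∈ Z
        rw [hZ]
        rcases eq_or_lt_of_le hule with heq | hlt
        · left
          refine ⟨heq, ?_⟩
          intro hc
          have huc : u = (c₂, t - s) := Prod.ext hc heq
          have h00 : ℓ[0]? = ℓ[i₀]? := by
            rw [h0, hu, huc]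
          have := (List.getElem?_inj (by omega : (0 : ℕ) < ℓ.length) hnodup).mp h00
          omega
        · right
          constructor
          · omega
          · omega
  exact ⟨main, main⟩
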